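/- Asymptotics of Ψ along the centering m(t). Let g : [0,∞) → [0,∞) be measurable with C_r := √(2/π) ∫_0^∞ g(y) y e^{√2 y} dy < ∞. Fix r > 0, let z > 0 and let z(·) be a positive function with z(t) → z as t → ∞. Then lim_{t→∞} Ψ_g(r,t, m(t) + z(t)) = C_r · z · e^{−√2 z}. -/

import Mathlib

open MeasureTheory Set Filter Topology

/-- The centering term m(t) = √2 t − (3/(2√2)) log t. -/
noncomputable def mFun (t : ℝ) : ℝ :=
  Real.sqrt 2 * t - 3 / (2 * Real.sqrt 2) * Real.log t

/-- The quantity Ψ_g(r,t,x) built from a measurable g : [0,∞) → [0,∞). -/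
noncomputable def PsiG (g : ℝ → ℝ) (r t x : ℝ) : ℝ :=
  Real.exp (-(Real.sqrt 2 * (x - Real.sqrt 2 * t))) / Real.sqrt (2 * Real.pi * (t - r)) *
    ∫ y in Ioi (0 : ℝ),
      g y * Real.exp (Real.sqrt 2 * y) *
        Real.exp (-(x - Real.sqrt 2 * t - y) ^ 2 / (2 * (t - r))) *
        (1 - Real.exp (-(2 * (x - mFun t) * y) / (t - r)))

lemma aux_sqrt_atTop : Tendsto Real.sqrt atTop atTop := by
  have := tendsto_rpow_atTop (by norm_num : (0:ℝ) < 1/2)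
  exact this.congr fun x => (Real.sqrt_eq_rpow x).symm

lemma aux_sqrt_sub_atTop (r : ℝ) : Tendsto (fun t : ℝ => Real.sqrt (t - r)) atTop atTop :=
  aux_sqrt_atTop.comp (tendsto_atTop_add_const_right _ (-r) tendsto_id)

lemma aux_inv_sqrt (r : ℝ) : Tendsto (fun t : ℝ => (Real.sqrt (t - r))⁻¹) atTop (𝓝 0) :=
  (aux_sqrt_sub_atTop r).inv_tendsto_atTop

lemma aux_ratio (r : ℝ) : Tendsto (fun t : ℝ => t / (t - r)) atTop (𝓝 1) := by
  have h1 : Tendsto (fun t : ℝ => 1 + r * (t - r)⁻¹) atTop (𝓝 (1 + r * 0)) :=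
    tendsto_const_nhds.add (tendsto_const_nhds.mul
      ((tendsto_atTop_add_const_right _ (-r) tendsto_id).inv_tendsto_atTop))
  rw [mul_zero, add_zero] at h1
  apply h1.congr'
  filter_upwards [eventually_gt_atTop (r + 1)] with t ht
  have : t - r ≠ 0 := by nlinarith
  field_simp
  ring

lemma aux_Q (r : ℝ) : Tendsto (fun t : ℝ => (t * Real.sqrt t) / ((t - r) * Real.sqrt (t - r)))
    atTop (𝓝 1) := by
  have hcont : ContinuousAt (fun x : ℝ => x * Real.sqrt x) 1 :=
    continuousAt_id.mul (Real.continuous_sqrt.continuousAt)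
  have h1 : Tendsto (fun t : ℝ => (t / (t - r)) * Real.sqrt (t / (t - r))) atTop
      (𝓝 (1 * Real.sqrt 1)) := (hcont.tendsto.comp (aux_ratio r))
  rw [one_mul, Real.sqrt_one] at h1
  apply h1.congr'
  filter_upwards [eventually_gt_atTop (max 0 (r + 1))] with t ht
  rw [max_lt_iff] at ht
  have ht0 : 0 < t := ht.1
  have htr : 0 < t - r := by linarith [ht.2]
  rw [Real.sqrt_div ht0.le, div_mul_div_comm]

lemma aux_log_div_sqrt (r : ℝ) :
    Tendsto (fun t : ℝ => Real.log t / Real.sqrt (t - r)) atTop (𝓝 0) := by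
  have h1 : Tendsto (fun t : ℝ => Real.log t / Real.sqrt t) atTop (𝓝 0) := by
    have h := (isLittleO_log_rpow_atTop (by norm_num : (0:ℝ) < 1/2)).tendsto_div_nhds_zero
    exact h.congr fun x => by rw [Real.sqrt_eq_rpow]
  have h2 : Tendsto (fun t : ℝ => (Real.log t / Real.sqrt t) * Real.sqrt (t / (t - r)))
      atTop (𝓝 (0 * Real.sqrt 1)) :=
    h1.mul ((Real.continuous_sqrt.continuousAt.tendsto).comp (aux_ratio r))
  rw [zero_mul] at h2
  apply h2.congr'
  filter_upwards [eventually_gt_atTop (max 1 (r + 1))] with t ht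
  rw [max_lt_iff] at ht
  have ht0 : (0:ℝ) < t := by linarith [ht.1]
  have htr : 0 < t - r := by linarith [ht.2]
  rw [Real.sqrt_div ht0.le]
  have hs : Real.sqrt t ≠ 0 := by positivity
  field_simp

lemma aux_slope : Tendsto (fun u : ℝ => (1 - Real.exp (-u)) / u) (𝓝[≠] 0) (𝓝 1) := by
  have hd : HasDerivAt (fun x : ℝ => 1 - Real.exp (-x)) 1 0 := by
    have h1 : HasDerivAt (fun x : ℝ => Real.exp (-x)) (-1) 0 := by
      simpa [Function.comp_def] using (Real.hasDerivAt_exp (-0)).comp 0 (hasDerivAt_neg 0)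
    simpa using h1.const_sub 1
  have := hasDerivAt_iff_tendsto_slope.mp hd
  apply this.congr
  intro x
  simp [slope_def_field, div_eq_mul_inv]

lemma aux_pointwise (r z : ℝ) (hz : 0 < z) (zf : ℝ → ℝ) (hzf_pos : ∀ t, 0 < zf t)
    (hzf : Tendsto zf atTop (𝓝 z)) (y : ℝ) (hy : 0 < y) :
    Tendsto (fun t : ℝ =>
      Real.exp (-(Real.sqrt 2 * ((mFun t + zf t) - Real.sqrt 2 * t))) /
          Real.sqrt (2 * Real.pi * (t - r)) *
        (Real.exp (-((mFun t + zf t) - Real.sqrt 2 * t - y) ^ 2 / (2 * (t - r))) *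
          (1 - Real.exp (-(2 * ((mFun t + zf t) - mFun t) * y) / (t - r)))))
      atTop (𝓝 (Real.sqrt (2 / Real.pi) * z * Real.exp (-(Real.sqrt 2 * z)) * y)) := by
  have hπ : (0:ℝ) < Real.pi := Real.pi_pos
  have h2 : Real.sqrt 2 ≠ 0 := by positivity
  set c : ℝ := 3 / (2 * Real.sqrt 2) with hc
  set u : ℝ → ℝ := fun t => 2 * zf t * y / (t - r) with hu
  -- limit of each factor
  have L1 : Tendsto (fun t => Real.exp (-(Real.sqrt 2 * zf t))) atTop
      (𝓝 (Real.exp (-(Real.sqrt 2 * z)))) :=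
    (Real.continuous_exp.continuousAt.tendsto).comp ((hzf.const_mul _).neg)
  have LP : Tendsto (fun t => (zf t - c * Real.log t - y) / Real.sqrt (t - r)) atTop (𝓝 0) := by
    have : Tendsto (fun t => zf t * (Real.sqrt (t - r))⁻¹ - c * (Real.log t / Real.sqrt (t - r))
        - y * (Real.sqrt (t - r))⁻¹) atTop (𝓝 (z * 0 - c * 0 - y * 0)) :=
      ((hzf.mul (aux_inv_sqrt r)).sub ((aux_log_div_sqrt r).const_mul c)).sub
        (tendsto_const_nhds.mul (aux_inv_sqrt r))
    simp only [mul_zero, sub_zero, zero_sub, neg_zero] at this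
    apply this.congr
    intro t
    rw [div_eq_mul_inv, mul_comm (Real.log t), mul_comm c, div_eq_mul_inv]
    ring
  have L2 : Tendsto (fun t => Real.exp (-((zf t - c * Real.log t - y) ^ 2 / (2 * (t - r)))))
      atTop (𝓝 1) := by
    have hsq : Tendsto (fun t => ((zf t - c * Real.log t - y) / Real.sqrt (t - r)) ^ 2 / 2)
        atTop (𝓝 ((0:ℝ) ^ 2 / 2)) := by
      exact (LP.pow 2).div_const 2
    rw [show ((0:ℝ)^2/2) = 0 by norm_num] at hsq
    have : Tendsto (fun t => (zf t - c * Real.log t - y) ^ 2 / (2 * (t - r))) atTop (𝓝 0) := by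
      apply hsq.congr'
      filter_upwards [eventually_gt_atTop (r + 1)] with t ht
      have htr : 0 < t - r := by linarith
      rw [div_pow, Real.sq_sqrt htr.le, div_div, mul_comm (t-r) 2]
    have := (Real.continuous_exp.continuousAt.tendsto).comp this.neg
    simpa [Function.comp_def] using this
  have hu0 : Tendsto u atTop (𝓝 0) := by
    have : Tendsto (fun t => 2 * zf t * y * (t - r)⁻¹) atTop (𝓝 (2 * z * y * 0)) :=
      (((hzf.const_mul 2).mul_const y).mul
        (tendsto_atTop_add_const_right _ (-r) tendsto_id).inv_tendsto_atTop)
    rw [mul_zero] at this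
    exact this.congr fun t => by simp only [hu, div_eq_mul_inv]
  have huneq : ∀ᶠ t in atTop, u t ≠ 0 := by
    filter_upwards [eventually_gt_atTop (r + 1)] with t ht
    have htr : 0 < t - r := by linarith
    have := hzf_pos t
    positivity
  have L3 : Tendsto (fun t => (1 - Real.exp (-u t)) / u t) atTop (𝓝 1) :=
    aux_slope.comp (tendsto_nhdsWithin_of_tendsto_nhds_of_eventually_within _ hu0 huneq)
  have L4 : Tendsto (fun t => 2 * zf t * y / Real.sqrt (2 * Real.pi) *
      ((t * Real.sqrt t) / ((t - r) * Real.sqrt (t - r)))) atTop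
      (𝓝 (2 * z * y / Real.sqrt (2 * Real.pi) * 1)) :=
    (((hzf.const_mul 2).mul_const y).div_const _).mul (aux_Q r)
  -- combined limit
  have L : Tendsto (fun t =>
      Real.exp (-(Real.sqrt 2 * zf t)) *
        Real.exp (-((zf t - c * Real.log t - y) ^ 2 / (2 * (t - r)))) *
        ((1 - Real.exp (-u t)) / u t) *
        (2 * zf t * y / Real.sqrt (2 * Real.pi) *
          ((t * Real.sqrt t) / ((t - r) * Real.sqrt (t - r))))) atTop
      (𝓝 (Real.exp (-(Real.sqrt 2 * z)) * 1 * 1 * (2 * z * y / Real.sqrt (2 * Real.pi) * 1))) :=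
    ((L1.mul L2).mul L3).mul L4
  have hval : Real.exp (-(Real.sqrt 2 * z)) * 1 * 1 * (2 * z * y / Real.sqrt (2 * Real.pi) * 1)
      = Real.sqrt (2 / Real.pi) * z * Real.exp (-(Real.sqrt 2 * z)) * y := by
    have hs : Real.sqrt (2 / Real.pi) = 2 / Real.sqrt (2 * Real.pi) := by
      rw [eq_div_iff (by positivity), ← Real.sqrt_mul (by positivity)]
      rw [show 2 / Real.pi * (2 * Real.pi) = 4 by field_simp; ring]
      rw [show (4:ℝ) = 2^2 by norm_num, Real.sqrt_sq (by norm_num)]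
    rw [hs]; ring
  rw [hval] at L
  -- eventual equality with the original expression
  apply L.congr'
  filter_upwards [eventually_gt_atTop (max 1 (r + 1))] with t ht
  rw [max_lt_iff] at ht
  have ht1 : (1:ℝ) < t := ht.1
  have ht0 : (0:ℝ) < t := by linarith
  have htr : (0:ℝ) < t - r := by linarith [ht.2]
  have hA : (mFun t + zf t) - Real.sqrt 2 * t = zf t - c * Real.log t := by
    simp only [mFun, hc]; ring
  have hzfsimp : (mFun t + zf t) - mFun t = zf t := by ring
  have hexp : Real.exp (-(Real.sqrt 2 * ((mFun t + zf t) - Real.sqrt 2 * t)))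
      = Real.exp (-(Real.sqrt 2 * zf t)) * (t * Real.sqrt t) := by
    rw [hA, show -(Real.sqrt 2 * (zf t - c * Real.log t))
        = -(Real.sqrt 2 * zf t) + (Real.log t + Real.log t / 2) by
      rw [hc]; field_simp; ring]
    rw [Real.exp_add, Real.exp_add, Real.exp_log ht0]
    congr 1
    rw [← Real.log_sqrt ht0.le, Real.exp_log (Real.sqrt_pos.mpr ht0)]
  have hsqrt : Real.sqrt (2 * Real.pi * (t - r))
      = Real.sqrt (2 * Real.pi) * Real.sqrt (t - r) := Real.sqrt_mul (by positivity) _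
  have hut : u t ≠ 0 := by
    have := hzf_pos t; positivity
  have hE2 : (1 - Real.exp (-(2 * ((mFun t + zf t) - mFun t) * y) / (t - r)))
      = ((1 - Real.exp (-u t)) / u t) * u t := by
    rw [div_mul_cancel₀ _ hut, hzfsimp, hu]
    ring_nf
  rw [hexp, hsqrt, hA, hE2, hu]
  have hst : Real.sqrt (t - r) ≠ 0 := by positivity
  have hsp : Real.sqrt (2 * Real.pi) ≠ 0 := by positivity
  field_simp

lemma aux_exp_split (zf : ℝ → ℝ) (t : ℝ) (ht0 : 0 < t) :
    Real.exp (-(Real.sqrt 2 * ((mFun t + zf t) - Real.sqrt 2 * t)))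
      = Real.exp (-(Real.sqrt 2 * zf t)) * (t * Real.sqrt t) := by
  have h2 : Real.sqrt 2 ≠ 0 := by positivity
  have hA : (mFun t + zf t) - Real.sqrt 2 * t = zf t - 3 / (2 * Real.sqrt 2) * Real.log t := by
    simp only [mFun]; ring
  rw [hA, show -(Real.sqrt 2 * (zf t - 3 / (2 * Real.sqrt 2) * Real.log t))
      = -(Real.sqrt 2 * zf t) + (Real.log t + Real.log t / 2) by field_simp; ring]
  rw [Real.exp_add, Real.exp_add, Real.exp_log ht0]
  congr 1
  rw [← Real.log_sqrt ht0.le, Real.exp_log (Real.sqrt_pos.mpr ht0)]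

lemma aux_ratio_le (r t : ℝ) (hr : 0 < r) (h2r : 2 * r ≤ t) :
    t * Real.sqrt t / (Real.sqrt (t - r) * (t - r)) ≤ 3 := by
  have htr : 0 < t - r := by linarith
  rw [div_le_iff₀ (by positivity)]
  have h2t : t ≤ 2 * (t - r) := by linarith
  have hkey : t * Real.sqrt t ≤ (2 * (t - r)) * Real.sqrt (2 * (t - r)) :=
    mul_le_mul h2t (Real.sqrt_le_sqrt h2t) (Real.sqrt_nonneg t) (by linarith)
  rw [Real.sqrt_mul (by norm_num : (0:ℝ) ≤ 2)] at hkey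
  have hs2 : Real.sqrt 2 ≤ 3 / 2 := by
    nlinarith [Real.sq_sqrt (show (0:ℝ) ≤ 2 by norm_num), Real.sqrt_nonneg 2]
  nlinarith [hkey, hs2, mul_nonneg htr.le (Real.sqrt_nonneg (t - r))]

/-- Asymptotics of Ψ along the centering m(t): if z(t) → z > 0 with z(·) positive, then
lim_{t→∞} Ψ_g(r,t,m(t) + z(t)) = C_r z e^{−√2 z},
where C_r = √(2/π) ∫₀^∞ g(y) y e^{√2 y} dy < ∞. -/
theorem psiG_asymptotics_centering
    (g : ℝ → ℝ) (hmeas : Measurable g) (hpos : ∀ y : ℝ, 0 ≤ y → 0 ≤ g y)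
    (hint : IntegrableOn (fun y => g y * (y * Real.exp (Real.sqrt 2 * y))) (Ioi 0))
    (r : ℝ) (hr : 0 < r) (z : ℝ) (hz : 0 < z)
    (zf : ℝ → ℝ) (hzf_pos : ∀ t : ℝ, 0 < zf t) (hzf : Tendsto zf atTop (𝓝 z)) :
    Tendsto (fun t : ℝ => PsiG g r t (mFun t + zf t)) atTop
      (𝓝 (Real.sqrt (2 / Real.pi) *
          (∫ y in Ioi (0 : ℝ), g y * (y * Real.exp (Real.sqrt 2 * y))) *
        (z * Real.exp (-(Real.sqrt 2 * z))))) := by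
  have hπ : (0:ℝ) < Real.pi := Real.pi_pos
  set F : ℝ → ℝ → ℝ := fun t y =>
    Real.exp (-(Real.sqrt 2 * ((mFun t + zf t) - Real.sqrt 2 * t))) /
        Real.sqrt (2 * Real.pi * (t - r)) *
      (g y * Real.exp (Real.sqrt 2 * y) *
        Real.exp (-((mFun t + zf t) - Real.sqrt 2 * t - y) ^ 2 / (2 * (t - r))) *
        (1 - Real.exp (-(2 * ((mFun t + zf t) - mFun t) * y) / (t - r)))) with hF
  have hPsiF : ∀ t, PsiG g r t (mFun t + zf t) = ∫ y in Ioi (0:ℝ), F t y := by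
    intro t
    simp only [PsiG, hF]
    rw [integral_const_mul]
  -- the dominating function
  set B : ℝ → ℝ := fun y => 6 * (z + 1) * (g y * (y * Real.exp (Real.sqrt 2 * y))) with hB
  have hBint : Integrable B ((volume : Measure ℝ).restrict (Ioi 0)) := hint.const_mul _
  -- measurability
  have hFmeas : ∀ᶠ t in atTop,
      AEStronglyMeasurable (F t) ((volume : Measure ℝ).restrict (Ioi 0)) := by
    apply Filter.Eventually.of_forall
    intro t
    apply Measurable.aestronglyMeasurable
    apply Measurable.const_mul
    apply Measurable.mul
    apply Measurable.mul
    apply Measurable.mul hmeas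
    · fun_prop
    · fun_prop
    · fun_prop
  -- the bound
  have hbound : ∀ᶠ t in atTop, ∀ᵐ y ∂((volume : Measure ℝ).restrict (Ioi 0)),
      ‖F t y‖ ≤ B y := by
    filter_upwards [eventually_ge_atTop (max (2 * r) 1), eventually_ge_atTop (r + 1),
      hzf.eventually (eventually_le_nhds (lt_add_one z))] with t hta htb hzle
    rw [max_le_iff] at hta
    have ht0 : (0:ℝ) < t := lt_of_lt_of_le one_pos hta.2
    have htr : (0:ℝ) < t - r := by linarith
    rw [ae_restrict_iff' measurableSet_Ioi]
    apply ae_of_all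
    intro y hy
    have hy0 : (0:ℝ) < y := hy
    have hgy : 0 ≤ g y := hpos y hy0.le
    have hzfm : (mFun t + zf t) - mFun t = zf t := by ring
    have hzft := hzf_pos t
    -- E2 bounds
    have hE2a : 0 ≤ 1 - Real.exp (-(2 * ((mFun t + zf t) - mFun t) * y) / (t - r)) := by
      rw [hzfm]
      have hle : -(2 * zf t * y) / (t - r) ≤ 0 :=
        div_nonpos_of_nonpos_of_nonneg (by nlinarith) htr.le
      linarith [Real.exp_le_one_iff.mpr hle]
    have hE2b : 1 - Real.exp (-(2 * ((mFun t + zf t) - mFun t) * y) / (t - r))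
        ≤ 2 * (z + 1) * y / (t - r) := by
      rw [hzfm]
      have h1 := Real.add_one_le_exp (-(2 * zf t * y) / (t - r))
      rw [neg_div] at h1
      rw [neg_div]
      have h2 : 2 * zf t * y / (t - r) ≤ 2 * (z + 1) * y / (t - r) := by
        gcongr
      linarith
    have hE1 : Real.exp (-((mFun t + zf t) - Real.sqrt 2 * t - y) ^ 2 / (2 * (t - r))) ≤ 1 :=
      Real.exp_le_one_iff.mpr (div_nonpos_of_nonpos_of_nonneg (neg_nonpos.mpr (sq_nonneg _)) (by linarith))
    have hKle : Real.exp (-(Real.sqrt 2 * ((mFun t + zf t) - Real.sqrt 2 * t))) /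
        Real.sqrt (2 * Real.pi * (t - r)) ≤ t * Real.sqrt t / Real.sqrt (t - r) := by
      rw [aux_exp_split zf t ht0]
      apply div_le_div₀ (by positivity) ?_ (by positivity) ?_
      · have he1 : Real.exp (-(Real.sqrt 2 * zf t)) ≤ 1 :=
          Real.exp_le_one_iff.mpr (by nlinarith [Real.sqrt_nonneg 2])
        exact mul_le_of_le_one_left (by positivity) he1
      · apply Real.sqrt_le_sqrt
        nlinarith [Real.pi_gt_three, htr]
    have hF0 : 0 ≤ F t y := by
      simp only [hF]
      apply mul_nonneg (by positivity)
      exact mul_nonneg (mul_nonneg (mul_nonneg hgy (Real.exp_nonneg _)) (Real.exp_nonneg _)) hE2a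
    rw [Real.norm_eq_abs, abs_of_nonneg hF0]
    have hinner0 : 0 ≤ g y * Real.exp (Real.sqrt 2 * y) *
        Real.exp (-((mFun t + zf t) - Real.sqrt 2 * t - y) ^ 2 / (2 * (t - r))) *
        (1 - Real.exp (-(2 * ((mFun t + zf t) - mFun t) * y) / (t - r))) :=
      mul_nonneg (mul_nonneg (mul_nonneg hgy (Real.exp_nonneg _)) (Real.exp_nonneg _)) hE2a
    calc F t y ≤ (t * Real.sqrt t / Real.sqrt (t - r)) *
          (g y * Real.exp (Real.sqrt 2 * y) * 1 * (2 * (z + 1) * y / (t - r))) := by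
          simp only [hF]
          apply mul_le_mul hKle ?_ hinner0 (by positivity)
          apply mul_le_mul ?_ hE2b hE2a (by positivity)
          apply mul_le_mul_of_nonneg_left hE1 (by positivity)
      _ = (t * Real.sqrt t / Real.sqrt (t - r) / (t - r) * (2 * (z + 1))) *
            (g y * (y * Real.exp (Real.sqrt 2 * y))) := by ring
      _ ≤ (3 * (2 * (z + 1))) * (g y * (y * Real.exp (Real.sqrt 2 * y))) := by
          apply mul_le_mul_of_nonneg_right ?_ (by positivity)
          rw [div_div]
          exact mul_le_mul_of_nonneg_right (aux_ratio_le r t hr hta.1) (by positivity)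
      _ = B y := by simp only [hB]; ring
  -- pointwise limit
  have hlim : ∀ᵐ y ∂((volume : Measure ℝ).restrict (Ioi 0)),
      Tendsto (fun t => F t y) atTop
        (𝓝 ((Real.sqrt (2 / Real.pi) * z * Real.exp (-(Real.sqrt 2 * z))) *
          (g y * (y * Real.exp (Real.sqrt 2 * y))))) := by
    rw [ae_restrict_iff' measurableSet_Ioi]
    apply ae_of_all
    intro y hy
    have h := (aux_pointwise r z hz zf hzf_pos hzf y hy).const_mul
      (g y * Real.exp (Real.sqrt 2 * y))
    have heq : (g y * Real.exp (Real.sqrt 2 * y)) *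
        (Real.sqrt (2 / Real.pi) * z * Real.exp (-(Real.sqrt 2 * z)) * y)
        = (Real.sqrt (2 / Real.pi) * z * Real.exp (-(Real.sqrt 2 * z))) *
          (g y * (y * Real.exp (Real.sqrt 2 * y))) := by ring
    rw [heq] at h
    exact h.congr fun t => by simp only [hF]; ring
  have key := tendsto_integral_filter_of_dominated_convergence B hFmeas hbound hBint hlim
  rw [show (fun t : ℝ => PsiG g r t (mFun t + zf t))
      = fun t => ∫ y in Ioi (0:ℝ), F t y from funext hPsiF]
  convert key using 2
  rw [integral_const_mul]
  ring
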